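/- For noise-free data d = F[m_*]w_* with w_* ∈ W_λ and penalty multiplier a(t) = min(|t|, τ), every stationary point m ∈ M of the reduced objective J̃_α[·; d] satisfies |m - m_*| < λ/r. -/

import Mathlib

open MeasureTheory Real Set

private lemma aux_abs_max {x a b p : ℝ} (h1 : a ≤ x) (h2 : x ≤ b) :
    |x - p| ≤ max |a - p| |b - p| := by
  rw [abs_le]
  constructor
  · have h := neg_abs_le (a - p); have h' := le_max_left |a - p| |b - p|; linarith
  · have h := le_abs_self (b - p); have h' := le_max_right |a - p| |b - p|; linarith

set_option maxHeartbeats 1000000 in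
/-- For noise-free data `d = F[m_*]w_*` with `w_* ∈ W_λ` nonzero
and penalty multiplier `a(t) = min(|t|, τ)`, every stationary point `m ∈ M` of
the reduced objective `J̃_α[·;d]` satisfies `|m - m_*| < λ/r`. -/
theorem stmt_14 (r mmin mmax lammax tmin tmax α lam mstar : ℝ)
    (wstar : ℝ → ℝ)
    (hr : 0 < r) (hmmin : 0 < mmin) (hmm : mmin ≤ mmax) (hlammax : 0 < lammax)
    (ht : tmin < tmax) (hα : 0 < α)
    (hlam : 0 < lam) (hlam' : lam ≤ lammax)
    (hmstar : mstar ∈ Ioo mmin mmax)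
    (hwstar : MemLp wstar 2 (volume : Measure ℝ))
    (hsupp : Function.support wstar ⊆ Icc (-lam) lam)
    (hnz : 0 < ∫ t, (wstar t) ^ 2)
    (hcont : Icc (mmin * r - lammax) (mmax * r + lammax) ⊆ Icc tmin tmax)
    (tau : ℝ)
    (htau : tau = max (max |tmin - mmin * r| |tmin - mmax * r|)
        (max |tmax - mmin * r| |tmax - mmax * r|))
    (a d : ℝ → ℝ)
    (ha : a = fun t => min |t| tau)
    (hd : d = fun t => wstar (t - mstar * r) / (4 * π * r))
    (J : ℝ → ℝ)
    (hJ : J = fun m => (2 * ∫ t in Icc tmin tmax, (d t) ^ 2)⁻¹ *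
        ∫ t in Icc tmin tmax, (4 * π * r * α * a (t - m * r)) ^ 2
          * (1 + (4 * π * r * α * a (t - m * r)) ^ 2)⁻¹ * (d t) ^ 2)
    (m : ℝ) (hm : m ∈ Ioo mmin mmax)
    (hstat : deriv J m = 0) :
    |m - mstar| < lam / r := by
  by_contra hcon
  push_neg at hcon
  have hπ : (0:ℝ) < π := Real.pi_pos
  set s : ℝ := mstar * r with hs
  set c : ℝ := 4 * π * r * α with hc
  have hcpos : 0 < c := by positivity
  -- containment bounds
  have h1 : tmin ≤ mmin * r - lammax := by
    have := hcont (left_mem_Icc.2 (by nlinarith))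
    exact this.1
  have h2 : mmax * r + lammax ≤ tmax := by
    have := hcont (right_mem_Icc.2 (by nlinarith))
    exact this.2
  have hmr1 : mmin * r < s := by
    have := mul_lt_mul_of_pos_right hmstar.1 hr; simpa [hs] using this
  have hmr2 : s < mmax * r := by
    have := mul_lt_mul_of_pos_right hmstar.2 hr; simpa [hs] using this
  -- support of d
  have hsuppd : ∀ t : ℝ, d t ≠ 0 → s - lam ≤ t ∧ t ≤ s + lam := by
    intro t htne
    have hw : wstar (t - s) ≠ 0 := by
      intro h0; apply htne; rw [hd]; simp [← hs, h0]
    have := hsupp (by simpa [Function.mem_support] using hw)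
    constructor <;> [linarith [this.1]; linarith [this.2]]
  have hIccd : ∀ t : ℝ, d t ≠ 0 → t ∈ Icc tmin tmax := by
    intro t htne
    obtain ⟨hl, hu⟩ := hsuppd t htne
    constructor
    · nlinarith
    · nlinarith
  -- integrability of d^2
  have hw2 : Integrable (fun t => wstar t ^ 2) := hwstar.integrable_sq
  have hd2fun : (fun t => d t ^ 2) = fun t => wstar (t - s) ^ 2 * ((4 * π * r) ^ 2)⁻¹ := by
    funext t; rw [hd]; rw [div_pow, div_eq_mul_inv]
  have hd2 : Integrable (fun t => d t ^ 2) := by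
    rw [hd2fun]
    exact (hw2.comp_sub_right s).mul_const _
  have hd2r : Integrable (fun t => d t ^ 2) (volume.restrict (Icc tmin tmax)) :=
    hd2.restrict
  have hd2meas : AEStronglyMeasurable (fun t => d t ^ 2)
      (volume.restrict (Icc tmin tmax)) := hd2r.aestronglyMeasurable
  -- positivity of the set integral of d^2
  have hintd : (∫ t in Icc tmin tmax, d t ^ 2) = ∫ t, d t ^ 2 := by
    apply setIntegral_eq_integral_of_forall_compl_eq_zero
    intro t htc
    by_contra h0
    exact htc (hIccd t (fun hz => h0 (by rw [hz]; ring)))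
  have hdint_pos : 0 < ∫ t, d t ^ 2 := by
    rw [hd2fun, integral_mul_const, integral_sub_right_eq_self (fun t => wstar t ^ 2) s]
    positivity
  have hCpos : 0 < 2 * ∫ t in Icc tmin tmax, d t ^ 2 := by
    rw [hintd]; linarith
  set C : ℝ := 2 * ∫ t in Icc tmin tmax, d t ^ 2 with hC
  -- measure of support of d is positive
  have hsupp_pos : 0 < volume (Function.support d) := by
    have h := (integral_pos_iff_support_of_nonneg (fun t => sq_nonneg (d t)) hd2).1 hdint_pos
    have : Function.support (fun t => d t ^ 2) = Function.support d := by
      ext t; simp [Function.mem_support, pow_eq_zero_iff]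
    rwa [this] at h
  -- the smooth surrogate integrand
  set F : ℝ → ℝ → ℝ := fun p t =>
    (c * (t - p * r)) ^ 2 * (1 + (c * (t - p * r)) ^ 2)⁻¹ * d t ^ 2 with hF
  set F' : ℝ → ℝ → ℝ := fun p t =>
    2 * (c * (t - p * r)) * (-(c * r)) / (1 + (c * (t - p * r)) ^ 2) ^ 2 * d t ^ 2 with hF'
  -- J agrees with the surrogate on Ioo mmin mmax
  have htaub : ∀ p ∈ Icc mmin mmax, ∀ t ∈ Icc tmin tmax, |t - p * r| ≤ tau := by
    intro p hp t htI
    have h3 : |t - p * r| ≤ max |tmin - p * r| |tmax - p * r| :=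
      aux_abs_max htI.1 htI.2
    have hpr : mmin * r ≤ p * r := mul_le_mul_of_nonneg_right hp.1 hr.le
    have hpr' : p * r ≤ mmax * r := mul_le_mul_of_nonneg_right hp.2 hr.le
    have h4 : |tmin - p * r| ≤ tau := by
      calc |tmin - p * r| = |p * r - tmin| := abs_sub_comm _ _
        _ ≤ max |mmin * r - tmin| |mmax * r - tmin| := aux_abs_max hpr hpr'
        _ = max |tmin - mmin * r| |tmin - mmax * r| := by
            rw [abs_sub_comm (mmin * r), abs_sub_comm (mmax * r)]
        _ ≤ tau := htau ▸ le_max_left _ _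
    have h5 : |tmax - p * r| ≤ tau := by
      calc |tmax - p * r| = |p * r - tmax| := abs_sub_comm _ _
        _ ≤ max |mmin * r - tmax| |mmax * r - tmax| := aux_abs_max hpr hpr'
        _ = max |tmax - mmin * r| |tmax - mmax * r| := by
            rw [abs_sub_comm (mmin * r), abs_sub_comm (mmax * r)]
        _ ≤ tau := htau ▸ le_max_right _ _
    exact h3.trans (max_le h4 h5)
  have hJeq : ∀ p ∈ Ioo mmin mmax, J p = C⁻¹ * ∫ t in Icc tmin tmax, F p t := by
    intro p hp
    simp only [hJ]
    congr 1
    refine setIntegral_congr_fun measurableSet_Icc (fun t htI => ?_)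
    have habs : |t - p * r| ≤ tau := htaub p ⟨hp.1.le, hp.2.le⟩ t htI
    have haeq : a (t - p * r) = |t - p * r| := by rw [ha]; exact min_eq_left habs
    simp only [hF, ← hc, haeq]
    rw [mul_pow, sq_abs, ← mul_pow]
  -- differentiate under the integral sign
  have key := hasDerivAt_integral_of_dominated_loc_of_deriv_le
      (μ := volume.restrict (Icc tmin tmax)) (F := F) (F' := F') (x₀ := m)
      (bound := fun t => c * r * d t ^ 2) (s := Metric.ball m 1) (Metric.ball_mem_nhds m one_pos)
      ?_ ?_ ?_ ?_ ?_ ?_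
  rotate_left
  · -- measurability of F p
    refine Filter.Eventually.of_forall (fun p => ?_)
    have hgc : Continuous fun x : ℝ => (c * x) ^ 2 * (1 + (c * x) ^ 2)⁻¹ :=
      ((continuous_const.mul continuous_id).pow 2).mul
        ((continuous_const.add ((continuous_const.mul continuous_id).pow 2)).inv₀
          (fun x => by show (1:ℝ) + (c * x) ^ 2 ≠ 0; positivity))
    exact ((hgc.comp (continuous_id.sub continuous_const)).aestronglyMeasurable).mul hd2meas
  · -- integrability of F m
    refine hd2r.mono' ?_ ?_
    · have hgc : Continuous fun x : ℝ => (c * x) ^ 2 * (1 + (c * x) ^ 2)⁻¹ :=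
        ((continuous_const.mul continuous_id).pow 2).mul
          ((continuous_const.add ((continuous_const.mul continuous_id).pow 2)).inv₀
            (fun x => by show (1:ℝ) + (c * x) ^ 2 ≠ 0; positivity))
      exact ((hgc.comp (continuous_id.sub continuous_const)).aestronglyMeasurable).mul hd2meas
    · refine Filter.Eventually.of_forall (fun t => ?_)
      simp only [hF, Real.norm_eq_abs]
      have hy2 : (0:ℝ) < 1 + (c * (t - m * r)) ^ 2 := by positivity
      have hfrac : (c * (t - m * r)) ^ 2 * (1 + (c * (t - m * r)) ^ 2)⁻¹ ≤ 1 := by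
        rw [mul_inv_le_iff₀ hy2]; nlinarith
      have hfrac0 : 0 ≤ (c * (t - m * r)) ^ 2 * (1 + (c * (t - m * r)) ^ 2)⁻¹ := by
        positivity
      rw [abs_mul, abs_of_nonneg hfrac0, abs_of_nonneg (sq_nonneg (d t))]
      nlinarith [sq_nonneg (d t)]
  · -- measurability of F' m
    have hgc : Continuous fun x : ℝ =>
        2 * (c * x) * (-(c * r)) / (1 + (c * x) ^ 2) ^ 2 :=
      ((continuous_const.mul (continuous_const.mul continuous_id)).mul
        continuous_const).div
        (((continuous_const.add ((continuous_const.mul continuous_id).pow 2)).pow 2))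
        (fun x => by positivity)
    exact ((hgc.comp (continuous_id.sub continuous_const)).aestronglyMeasurable).mul hd2meas
  · -- uniform bound on F'
    refine Filter.Eventually.of_forall (fun t p _ => ?_)
    simp only [hF', Real.norm_eq_abs]
    set y : ℝ := c * (t - p * r) with hy
    have hden : (0:ℝ) < (1 + y ^ 2) ^ 2 := by positivity
    have hnum : |2 * y * (-(c * r))| = 2 * c * r * |y| := by
      rw [abs_mul, abs_mul, abs_neg, abs_of_pos (mul_pos hcpos hr),
        abs_of_nonneg (by norm_num : (0:ℝ) ≤ 2)]
      ring
    rw [abs_mul, abs_div, hnum, abs_of_pos hden, abs_of_nonneg (sq_nonneg (d t))]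
    have hkey : 2 * c * r * |y| / (1 + y ^ 2) ^ 2 ≤ c * r := by
      rw [div_le_iff₀ hden]
      have h6 : 2 * |y| ≤ (1 + y ^ 2) ^ 2 := by
        nlinarith [sq_nonneg (|y| - 1), sq_abs y, sq_nonneg y, abs_nonneg y]
      nlinarith [mul_le_mul_of_nonneg_left h6 (mul_pos hcpos hr).le]
    exact mul_le_mul_of_nonneg_right hkey (sq_nonneg (d t))
  · -- bound integrable
    exact hd2r.const_mul _
  · -- pointwise differentiability
    refine Filter.Eventually.of_forall (fun t p _ => ?_)
    have hy : HasDerivAt (fun q : ℝ => c * (t - q * r)) (-(c * r)) p := by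
      have h0 : HasDerivAt (fun q : ℝ => t - q * r) (-r) p := by
        simpa using ((hasDerivAt_id p).mul_const r).const_sub t
      simpa [mul_comm, mul_assoc, mul_neg] using h0.const_mul c
    have hu : HasDerivAt (fun q : ℝ => (c * (t - q * r)) ^ 2)
        (2 * (c * (t - p * r)) * (-(c * r))) p := by
      simpa [mul_comm, mul_assoc] using hy.fun_pow 2
    have hv : HasDerivAt (fun q : ℝ => 1 + (c * (t - q * r)) ^ 2)
        (2 * (c * (t - p * r)) * (-(c * r))) p := hu.const_add 1
    have hvne : (1 : ℝ) + (c * (t - p * r)) ^ 2 ≠ 0 := by positivity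
    have hdiv := hu.fun_div hv hvne
    have hmul := hdiv.mul_const (d t ^ 2)
    have harith : (2 * (c * (t - p * r)) * (-(c * r)) * (1 + (c * (t - p * r)) ^ 2) -
        (c * (t - p * r)) ^ 2 * (2 * (c * (t - p * r)) * (-(c * r)))) /
        (1 + (c * (t - p * r)) ^ 2) ^ 2 * d t ^ 2 = F' p t := by
      simp only [hF']
      field_simp
      ring
    rw [harith] at hmul
    have hfun : (fun q : ℝ => (c * (t - q * r)) ^ 2 / (1 + (c * (t - q * r)) ^ 2) * d t ^ 2)
        = fun q : ℝ => F q t := by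
      funext q; simp only [hF, div_eq_mul_inv]
    simp only [hfun] at hmul; exact hmul
  obtain ⟨hF'int, hder⟩ := key
  -- derivative of J at m
  have hLder : HasDerivAt (fun p => C⁻¹ * ∫ t in Icc tmin tmax, F p t)
      (C⁻¹ * ∫ t in Icc tmin tmax, F' m t) m := hder.const_mul C⁻¹
  have hJL : deriv J m = C⁻¹ * ∫ t in Icc tmin tmax, F' m t := by
    have hev : J =ᶠ[nhds m] fun p => C⁻¹ * ∫ t in Icc tmin tmax, F p t :=
      Filter.eventuallyEq_of_mem (isOpen_Ioo.mem_nhds hm) hJeq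
    rw [hev.deriv_eq, hLder.deriv]
  have hI0 : (∫ t in Icc tmin tmax, F' m t) = 0 := by
    have := hstat
    rw [hJL] at this
    have hCne : C⁻¹ ≠ 0 := inv_ne_zero (ne_of_gt hCpos)
    exact (mul_eq_zero.1 this).resolve_left hCne
  -- support of F' m has positive measure in the restricted measure
  have hsubF' : Function.support d \ {m * r} ⊆ Function.support (F' m) := by
    intro t htm
    obtain ⟨htd, htne⟩ := htm
    simp only [Function.mem_support, hF'] at htd ⊢
    have hy0 : c * (t - m * r) ≠ 0 := by
      apply mul_ne_zero (ne_of_gt hcpos)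
      intro h0
      exact htne (by simp only [mem_singleton_iff]; linarith [sub_eq_zero.1 h0])
    have hden : ((1:ℝ) + (c * (t - m * r)) ^ 2) ^ 2 ≠ 0 := by positivity
    exact mul_ne_zero (div_ne_zero (by
      exact mul_ne_zero (mul_ne_zero two_ne_zero hy0) (by nlinarith)) hden)
      (pow_ne_zero 2 htd)
  have hmeas_pos : 0 < (volume.restrict (Icc tmin tmax)) (Function.support (F' m)) := by
    rw [Measure.restrict_apply' measurableSet_Icc]
    have hsub2 : Function.support d \ {m * r} ⊆ Function.support (F' m) ∩ Icc tmin tmax := by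
      intro t htm
      refine ⟨hsubF' htm, hIccd t htm.1⟩
    have hμd : volume (Function.support d \ {m * r}) = volume (Function.support d) :=
      measure_diff_null (measure_singleton _)
    calc (0:ENNReal) < volume (Function.support d \ {m * r}) := by rw [hμd]; exact hsupp_pos
      _ ≤ volume (Function.support (F' m) ∩ Icc tmin tmax) := measure_mono hsub2
  -- sign analysis: contradiction
  have habs : lam ≤ |m * r - s| := by
    have : lam / r * r ≤ |m - mstar| * r := mul_le_mul_of_nonneg_right hcon hr.le
    rw [div_mul_cancel₀ _ (ne_of_gt hr)] at this
    calc lam ≤ |m - mstar| * r := this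
      _ = |(m - mstar) * r| := by rw [abs_mul, abs_of_pos hr]
      _ = |m * r - s| := by rw [hs]; ring_nf
  rcases le_abs.mp habs with hge | hle
  · -- s + lam ≤ m * r : the integrand F' m is nonneg, with support of positive measure
    have hpos : ∀ t, 0 ≤ F' m t := by
      intro t
      rcases eq_or_ne (d t) 0 with h0 | h0
      · simp [hF', h0]
      · have hub := (hsuppd t h0).2
        have hyle : t - m * r ≤ 0 := by linarith
        have hynum : 0 ≤ 2 * (c * (t - m * r)) * (-(c * r)) := by
          nlinarith [mul_nonneg (mul_nonneg hcpos.le hr.le) (neg_nonneg.2 hyle), hcpos.le]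
        have hden : (0:ℝ) < (1 + (c * (t - m * r)) ^ 2) ^ 2 := by positivity
        exact mul_nonneg (div_nonneg hynum hden.le) (sq_nonneg _)
    have hposI := (integral_pos_iff_support_of_nonneg_ae
        (ae_of_all _ hpos) hF'int).2 hmeas_pos
    rw [hI0] at hposI
    exact lt_irrefl 0 hposI
  · -- m * r ≤ s - lam : the integrand F' m is nonpos, with support of positive measure
    have hneg : ∀ t, 0 ≤ -F' m t := by
      intro t
      rcases eq_or_ne (d t) 0 with h0 | h0
      · simp [hF', h0]
      · have hlb := (hsuppd t h0).1
        have hyge : 0 ≤ t - m * r := by linarith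
        have hynum : 2 * (c * (t - m * r)) * (-(c * r)) ≤ 0 := by
          nlinarith [mul_nonneg (mul_nonneg hcpos.le hr.le) hyge, hcpos.le]
        have hden : (0:ℝ) < (1 + (c * (t - m * r)) ^ 2) ^ 2 := by positivity
        have : F' m t ≤ 0 :=
          mul_nonpos_of_nonpos_of_nonneg (div_nonpos_of_nonpos_of_nonneg hynum hden.le)
            (sq_nonneg _)
        linarith
    have hint : Integrable (fun t => -F' m t) (volume.restrict (Icc tmin tmax)) := by
      exact hF'int.neg
    have hsupp_eq : Function.support (fun t => -F' m t) = Function.support (F' m) := by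
      ext t; simp [Function.mem_support, neg_eq_zero]
    have hposI := (integral_pos_iff_support_of_nonneg_ae
        (ae_of_all _ hneg) hint).2 (by rw [hsupp_eq]; exact hmeas_pos)
    rw [integral_neg, hI0] at hposI
    norm_num at hposI
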